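/- Let Φ : E × ℝ × ℝ → E, written Φ(a,t,s), be twice continuously differentiable jointly in all variables, and let u, v : E × ℝ × ℝ → E be continuously differentiable maps such that for all (a,t,s): ∂_s Φ(a,t,s) = v(Φ(a,t,s),t,s) and ∂_t Φ(a,t,s) = u(Φ(a,t,s),t,s). Then at every point of the form x = Φ(a,t,s) the vanishing Lie-bracket (compatibility) identity holds: ∂_s u(x,t,s) + D_x u(x,t,s)[v(x,t,s)] − D_x v(x,t,s)[u(x,t,s)] − ∂_t v(x,t,s) = 0, where D_x denotes the Fréchet derivative in the state variable. -/

import Mathlib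

open scoped RealInnerProductSpace

/-- **Vanishing Lie-bracket (compatibility) identity for two-parameter flows.**
If `Φ(a,t,s)` is a `C²` two-parameter flow whose sampling-time velocity is `v`
(`∂ₛΦ = v ∘ Φ`) and whose physics-time velocity is `u` (`∂ₜΦ = u ∘ Φ`), with `u, v`
continuously differentiable, then at every point `x = Φ(a,t,s)` we have
`∂ₛu(x,t,s) + Dₓu(x,t,s)[v(x,t,s)] − Dₓv(x,t,s)[u(x,t,s)] − ∂ₜv(x,t,s) = 0`. -/
theorem compatibility_identity (d : ℕ)
    (Φ u v : EuclideanSpace ℝ (Fin d) × ℝ × ℝ → EuclideanSpace ℝ (Fin d))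
    (hΦ : ContDiff ℝ 2 Φ) (hu : ContDiff ℝ 1 u) (hv : ContDiff ℝ 1 v)
    (hflow_s : ∀ (a : EuclideanSpace ℝ (Fin d)) (t s : ℝ),
      deriv (fun s' => Φ (a, t, s')) s = v (Φ (a, t, s), t, s))
    (hflow_t : ∀ (a : EuclideanSpace ℝ (Fin d)) (t s : ℝ),
      deriv (fun t' => Φ (a, t', s)) t = u (Φ (a, t, s), t, s)) :
    ∀ (a : EuclideanSpace ℝ (Fin d)) (t s : ℝ),
      deriv (fun s' => u (Φ (a, t, s), t, s')) s
        + fderiv ℝ (fun y => u (y, t, s)) (Φ (a, t, s)) (v (Φ (a, t, s), t, s))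
        - fderiv ℝ (fun y => v (y, t, s)) (Φ (a, t, s)) (u (Φ (a, t, s), t, s))
        - deriv (fun t' => v (Φ (a, t, s), t', s)) t = 0 := by
  intro a t s
  let g : ℝ × ℝ → EuclideanSpace ℝ (Fin d) := fun p => Φ (a, p)
  have hg : ContDiff ℝ 2 g := hΦ.comp (contDiff_const.prodMk contDiff_id)
  have hgd : Differentiable ℝ g := hg.differentiable (by norm_num)
  have hud : Differentiable ℝ u := hu.differentiable one_ne_zero
  have hvd : Differentiable ℝ v := hv.differentiable one_ne_zero
  -- partial derivatives of g
  have h2 : ∀ p : ℝ × ℝ, fderiv ℝ g p ((0:ℝ), (1:ℝ)) = v (g p, p) := by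
    intro p
    have hline : HasDerivAt (fun s' : ℝ => (p.1, s')) ((0:ℝ), (1:ℝ)) p.2 :=
      (hasDerivAt_const p.2 p.1).prodMk (hasDerivAt_id p.2)
    have hc : HasDerivAt (fun s' : ℝ => g (p.1, s')) (fderiv ℝ g p ((0:ℝ),(1:ℝ))) p.2 :=
      by have := (hgd (p.1, p.2)).hasFDerivAt.comp_hasDerivAt p.2 hline; exact this
    rw [← hc.deriv]
    exact hflow_s a p.1 p.2
  have h1 : ∀ p : ℝ × ℝ, fderiv ℝ g p ((1:ℝ), (0:ℝ)) = u (g p, p) := by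
    intro p
    have hline : HasDerivAt (fun t' : ℝ => (t', p.2)) ((1:ℝ), (0:ℝ)) p.1 :=
      (hasDerivAt_id p.1).prodMk (hasDerivAt_const p.1 p.2)
    have hc : HasDerivAt (fun t' : ℝ => g (t', p.2)) (fderiv ℝ g p ((1:ℝ),(0:ℝ))) p.1 :=
      by have := (hgd (p.1, p.2)).hasFDerivAt.comp_hasDerivAt p.1 hline; exact this
    rw [← hc.deriv]
    exact hflow_t a p.1 p.2
  set p0 : ℝ × ℝ := (t, s) with hp0
  set A := fderiv ℝ (fderiv ℝ g) p0 with hAdef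
  have hfd : ContDiff ℝ 1 (fderiv ℝ g) := hg.fderiv_right (le_refl _)
  have hAd : HasFDerivAt (fderiv ℝ g) A p0 := ((hfd.differentiable one_ne_zero) p0).hasFDerivAt
  have hsymm : ∀ w z : ℝ × ℝ, A w z = A z w :=
    second_derivative_symmetric (fun y => (hgd y).hasFDerivAt) hAd
  have hF : HasFDerivAt (fun p : ℝ × ℝ => (g p, p))
      ((fderiv ℝ g p0).prod (ContinuousLinearMap.id ℝ (ℝ × ℝ))) p0 :=
    (hgd p0).hasFDerivAt.prodMk (hasFDerivAt_id p0)
  -- Claim A : A (1,0) (0,1) = fderiv v (x,t,s) (u, 1, 0)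
  have hclaimA : A ((1:ℝ),(0:ℝ)) ((0:ℝ),(1:ℝ))
      = fderiv ℝ v (g p0, p0) (u (g p0, p0), (1:ℝ), (0:ℝ)) := by
    have hL : HasFDerivAt (fun p : ℝ × ℝ => fderiv ℝ g p ((0:ℝ),(1:ℝ)))
        ((ContinuousLinearMap.apply ℝ (EuclideanSpace ℝ (Fin d)) ((0:ℝ),(1:ℝ))).comp A) p0 :=
      (ContinuousLinearMap.apply ℝ (EuclideanSpace ℝ (Fin d))
        ((0:ℝ),(1:ℝ))).hasFDerivAt.comp p0 hAd
    have hR0 : HasFDerivAt (v ∘ fun p : ℝ × ℝ => (g p, p))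
        ((fderiv ℝ v (g p0, p0)).comp
          ((fderiv ℝ g p0).prod (ContinuousLinearMap.id ℝ (ℝ × ℝ)))) p0 :=
      HasFDerivAt.comp (f := fun p : ℝ × ℝ => (g p, p)) p0 (hvd (g p0, p0)).hasFDerivAt hF
    have hR : HasFDerivAt (fun p : ℝ × ℝ => v (g p, p))
        ((fderiv ℝ v (g p0, p0)).comp
          ((fderiv ℝ g p0).prod (ContinuousLinearMap.id ℝ (ℝ × ℝ)))) p0 := hR0
    have heq : (fun p : ℝ × ℝ => fderiv ℝ g p ((0:ℝ),(1:ℝ))) = fun p => v (g p, p) :=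
      funext h2
    rw [heq] at hL
    have huniq := hL.unique hR
    have happ := congrArg (fun L : (ℝ × ℝ) →L[ℝ] EuclideanSpace ℝ (Fin d) =>
      L ((1:ℝ),(0:ℝ))) huniq
    simp only [ContinuousLinearMap.comp_apply, ContinuousLinearMap.prod_apply,
      ContinuousLinearMap.coe_id', id_eq, ContinuousLinearMap.apply_apply] at happ
    rw [h1 p0] at happ
    exact happ
  -- Claim B : A (0,1) (1,0) = fderiv u (x,t,s) (v, 0, 1)
  have hclaimB : A ((0:ℝ),(1:ℝ)) ((1:ℝ),(0:ℝ))
      = fderiv ℝ u (g p0, p0) (v (g p0, p0), (0:ℝ), (1:ℝ)) := by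
    have hL : HasFDerivAt (fun p : ℝ × ℝ => fderiv ℝ g p ((1:ℝ),(0:ℝ)))
        ((ContinuousLinearMap.apply ℝ (EuclideanSpace ℝ (Fin d)) ((1:ℝ),(0:ℝ))).comp A) p0 :=
      (ContinuousLinearMap.apply ℝ (EuclideanSpace ℝ (Fin d))
        ((1:ℝ),(0:ℝ))).hasFDerivAt.comp p0 hAd
    have hR0 : HasFDerivAt (u ∘ fun p : ℝ × ℝ => (g p, p))
        ((fderiv ℝ u (g p0, p0)).comp
          ((fderiv ℝ g p0).prod (ContinuousLinearMap.id ℝ (ℝ × ℝ)))) p0 :=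
      HasFDerivAt.comp (f := fun p : ℝ × ℝ => (g p, p)) p0 (hud (g p0, p0)).hasFDerivAt hF
    have hR : HasFDerivAt (fun p : ℝ × ℝ => u (g p, p))
        ((fderiv ℝ u (g p0, p0)).comp
          ((fderiv ℝ g p0).prod (ContinuousLinearMap.id ℝ (ℝ × ℝ)))) p0 := hR0
    have heq : (fun p : ℝ × ℝ => fderiv ℝ g p ((1:ℝ),(0:ℝ))) = fun p => u (g p, p) :=
      funext h1
    rw [heq] at hL
    have huniq := hL.unique hR
    have happ := congrArg (fun L : (ℝ × ℝ) →L[ℝ] EuclideanSpace ℝ (Fin d) =>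
      L ((0:ℝ),(1:ℝ))) huniq
    simp only [ContinuousLinearMap.comp_apply, ContinuousLinearMap.prod_apply,
      ContinuousLinearMap.coe_id', id_eq, ContinuousLinearMap.apply_apply] at happ
    rw [h2 p0] at happ
    exact happ
  -- identify the four goal terms
  have hgp0 : g p0 = Φ (a, t, s) := rfl
  have e1 : deriv (fun s' => u (Φ (a, t, s), t, s')) s
      = fderiv ℝ u (Φ (a, t, s), t, s) ((0 : EuclideanSpace ℝ (Fin d)), (0:ℝ), (1:ℝ)) := by
    have hline : HasDerivAt (fun s' : ℝ => ((Φ (a, t, s) : EuclideanSpace ℝ (Fin d)), t, s'))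
        ((0 : EuclideanSpace ℝ (Fin d)), (0:ℝ), (1:ℝ)) s :=
      (hasDerivAt_const s _).prodMk ((hasDerivAt_const s t).prodMk (hasDerivAt_id s))
    exact ((hud _).hasFDerivAt.comp_hasDerivAt s hline).deriv
  have e4 : deriv (fun t' => v (Φ (a, t, s), t', s)) t
      = fderiv ℝ v (Φ (a, t, s), t, s) ((0 : EuclideanSpace ℝ (Fin d)), (1:ℝ), (0:ℝ)) := by
    have hline : HasDerivAt (fun t' : ℝ => ((Φ (a, t, s) : EuclideanSpace ℝ (Fin d)), t', s))
        ((0 : EuclideanSpace ℝ (Fin d)), (1:ℝ), (0:ℝ)) t :=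
      (hasDerivAt_const t _).prodMk ((hasDerivAt_id t).prodMk (hasDerivAt_const t s))
    exact ((hvd _).hasFDerivAt.comp_hasDerivAt t hline).deriv
  have e2 : fderiv ℝ (fun y => u (y, t, s)) (Φ (a, t, s)) (v (Φ (a, t, s), t, s))
      = fderiv ℝ u (Φ (a, t, s), t, s) (v (Φ (a, t, s), t, s), (0:ℝ), (0:ℝ)) := by
    have hc : HasFDerivAt (fun y : EuclideanSpace ℝ (Fin d) => u (y, t, s))
        ((fderiv ℝ u (Φ (a, t, s), t, s)).comp
          (ContinuousLinearMap.inl ℝ (EuclideanSpace ℝ (Fin d)) (ℝ × ℝ))) (Φ (a, t, s)) :=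
      (hud _).hasFDerivAt.comp _ (hasFDerivAt_prodMk_left (Φ (a, t, s)) ((t, s) : ℝ × ℝ))
    rw [hc.fderiv]
    rfl
  have e3 : fderiv ℝ (fun y => v (y, t, s)) (Φ (a, t, s)) (u (Φ (a, t, s), t, s))
      = fderiv ℝ v (Φ (a, t, s), t, s) (u (Φ (a, t, s), t, s), (0:ℝ), (0:ℝ)) := by
    have hc : HasFDerivAt (fun y : EuclideanSpace ℝ (Fin d) => v (y, t, s))
        ((fderiv ℝ v (Φ (a, t, s), t, s)).comp
          (ContinuousLinearMap.inl ℝ (EuclideanSpace ℝ (Fin d)) (ℝ × ℝ))) (Φ (a, t, s)) :=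
      (hvd _).hasFDerivAt.comp _ (hasFDerivAt_prodMk_left (Φ (a, t, s)) ((t, s) : ℝ × ℝ))
    rw [hc.fderiv]
    rfl
  rw [e1, e2, e3, e4]
  -- split the claims
  have hsplitA : fderiv ℝ v (Φ (a, t, s), t, s) (u (Φ (a, t, s), t, s), (1:ℝ), (0:ℝ))
      = fderiv ℝ v (Φ (a, t, s), t, s) (u (Φ (a, t, s), t, s), (0:ℝ), (0:ℝ))
        + fderiv ℝ v (Φ (a, t, s), t, s) ((0 : EuclideanSpace ℝ (Fin d)), (1:ℝ), (0:ℝ)) := by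
    rw [← ContinuousLinearMap.map_add]
    norm_num
  have hsplitB : fderiv ℝ u (Φ (a, t, s), t, s) (v (Φ (a, t, s), t, s), (0:ℝ), (1:ℝ))
      = fderiv ℝ u (Φ (a, t, s), t, s) (v (Φ (a, t, s), t, s), (0:ℝ), (0:ℝ))
        + fderiv ℝ u (Φ (a, t, s), t, s) ((0 : EuclideanSpace ℝ (Fin d)), (0:ℝ), (1:ℝ)) := by
    rw [← ContinuousLinearMap.map_add]
    norm_num
  have key := (hsplitB.symm.trans (hclaimB.symm.trans ((hsymm _ _).trans
    (hclaimA.trans hsplitA))))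
  rw [sub_sub, sub_eq_zero, add_comm, key]
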